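/- The value E_6(e^{2πi/3}) is a real number strictly greater than 1. -/

import Mathlib

open Complex

/-- σ_k(n) = sum of k-th powers of divisors of n. -/
noncomputable def sigma' (k n : ℕ) : ℕ := ∑ d ∈ n.divisors, d ^ k

/-- The quasimodular Eisenstein series E₂. -/
noncomputable def E2 (τ : ℂ) : ℂ :=
  1 - 24 * ∑' n : ℕ, (sigma' 1 (n + 1) : ℂ) * Complex.exp (2 * Real.pi * Complex.I * τ) ^ (n + 1)

/-- The Eisenstein series E₄. -/
noncomputable def E4 (τ : ℂ) : ℂ :=
  1 + 240 * ∑' n : ℕ, (sigma' 3 (n + 1) : ℂ) * Complex.exp (2 * Real.pi * Complex.I * τ) ^ (n + 1)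

/-- The Eisenstein series E₆. -/
noncomputable def E6 (τ : ℂ) : ℂ :=
  1 - 504 * ∑' n : ℕ, (sigma' 5 (n + 1) : ℂ) * Complex.exp (2 * Real.pi * Complex.I * τ) ^ (n + 1)

/-- Ẽ_N(τ) = (N·E₂(Nτ) − E₂(τ))/(N − 1). -/
noncomputable def Etilde (N : ℕ) (τ : ℂ) : ℂ :=
  ((N : ℂ) * E2 ((N : ℂ) * τ) - E2 τ) / ((N : ℂ) - 1)

/-- The standard fundamental domain of SL₂(ℤ). -/
def FGamma : Set ℂ :=
  {τ : ℂ | 0 < τ.im ∧ -(1 / 2) ≤ τ.re ∧ τ.re < 1 / 2 ∧ 1 ≤ ‖τ‖}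

/-- The fundamental domain F_p = F_Γ ∪ ⋃_{k=0}^{p-1} ST^k(F_Γ) of Γ₀(p). -/
def Fp (p : ℕ) : Set ℂ :=
  FGamma ∪ ⋃ k ∈ Finset.range p, (fun τ : ℂ => -1 / (τ + (k : ℂ))) '' FGamma

lemma sigma5_le (m : ℕ) : sigma' 5 m ≤ m ^ 6 := by
  rcases eq_or_ne m 0 with rfl | hm
  · simp [sigma']
  calc sigma' 5 m ≤ ∑ d ∈ Finset.Icc 1 m, d ^ 5 := by
        apply Finset.sum_le_sum_of_subset
        intro d hd
        rw [Nat.mem_divisors] at hd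
        exact Finset.mem_Icc.2 ⟨Nat.pos_of_dvd_of_pos hd.1 (Nat.pos_of_ne_zero hm),
          Nat.le_of_dvd (Nat.pos_of_ne_zero hm) hd.1⟩
    _ ≤ ∑ _d ∈ Finset.Icc 1 m, m ^ 5 := by
        apply Finset.sum_le_sum
        intro d hd
        exact Nat.pow_le_pow_left (Finset.mem_Icc.1 hd).2 5
    _ = m * m ^ 5 := by rw [Finset.sum_const, Nat.card_Icc]; simp [Nat.mul_comm]
    _ = m ^ 6 := by ring

lemma pow6_le (k : ℕ) : (k + 2) ^ 6 ≤ 64 * 12 ^ k := by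
  induction k with
  | zero => norm_num
  | succ n ih =>
    have h : (2 * (n + 3)) ^ 6 ≤ (3 * (n + 2)) ^ 6 := Nat.pow_le_pow_left (by omega) 6
    rw [mul_pow, mul_pow] at h
    norm_num at h
    have h1 : 64 * (n + 3) ^ 6 ≤ 64 * (12 * (n + 2) ^ 6) := h.trans (by rw [← mul_assoc]; exact Nat.mul_le_mul_right _ (by norm_num))
    have h2 : (n + 3) ^ 6 ≤ 12 * (n + 2) ^ 6 := Nat.le_of_mul_le_mul_left h1 (by norm_num)
    calc (n + 1 + 2) ^ 6 = (n + 3) ^ 6 := by ring_nf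
      _ ≤ 12 * (n + 2) ^ 6 := h2
      _ ≤ 12 * (64 * 12 ^ n) := Nat.mul_le_mul_left 12 ih
      _ = 64 * 12 ^ (n + 1) := by ring

lemma r_lt : Real.exp (-(Real.sqrt 3 * Real.pi)) < 1 / 76 := by
  have hs : (1.7 : ℝ) ≤ Real.sqrt 3 := by
    rw [show (1.7 : ℝ) = Real.sqrt (1.7 ^ 2) by rw [Real.sqrt_sq]; norm_num]
    exact Real.sqrt_le_sqrt (by norm_num)
  have hpi : (3.14 : ℝ) ≤ Real.pi := by linarith [Real.pi_gt_d6]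
  have h5 : (5 : ℝ) ≤ Real.sqrt 3 * Real.pi := by nlinarith
  have hexp5 : (76 : ℝ) < Real.exp 5 := by
    have h : Real.exp 5 = Real.exp 1 ^ 5 := by
      rw [← Real.exp_nat_mul]; norm_num
    have h2 : (2.7 : ℝ) ^ 5 < Real.exp 1 ^ 5 := by
      apply pow_lt_pow_left₀ _ (by norm_num) (by norm_num)
      linarith [Real.exp_one_gt_d9]
    rw [h]; nlinarith
  have : (76 : ℝ) < Real.exp (Real.sqrt 3 * Real.pi) :=
    hexp5.trans_le (Real.exp_le_exp.2 h5)
  rw [Real.exp_neg]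
  rw [inv_lt_comm₀ (Real.exp_pos _) (by norm_num)]
  linarith

lemma summable_f :
    Summable (fun n : ℕ => (sigma' 5 (n + 1) : ℝ) * (-(Real.exp (-(Real.sqrt 3 * Real.pi)))) ^ (n + 1)) := by
  set r : ℝ := Real.exp (-(Real.sqrt 3 * Real.pi)) with hr
  have hr0 : 0 < r := Real.exp_pos _
  have hr1 : r < 1 / 76 := r_lt
  apply Summable.of_norm
  have hle : ∀ n : ℕ, ‖(sigma' 5 (n + 1) : ℝ) * (-r) ^ (n + 1)‖ ≤ (64 * r) ^ (n + 1) := by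
    intro n
    rw [norm_mul, norm_pow, norm_neg, Real.norm_of_nonneg hr0.le,
      Real.norm_natCast, mul_pow]
    apply mul_le_mul_of_nonneg_right _ (pow_nonneg hr0.le _)
    have h1 : sigma' 5 (n + 1) ≤ (n + 1) ^ 6 := sigma5_le _
    have h2 : (n + 1) ^ 6 ≤ 64 ^ (n + 1) := by
      calc (n + 1) ^ 6 ≤ (2 ^ (n + 1)) ^ 6 :=
            Nat.pow_le_pow_left (Nat.lt_two_pow_self (n := n + 1)).le 6
        _ = 64 ^ (n + 1) := by rw [← pow_mul, mul_comm, pow_mul]; norm_num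
    calc ((sigma' 5 (n + 1) : ℕ) : ℝ) ≤ ((64 ^ (n + 1) : ℕ) : ℝ) := by
          exact_mod_cast h1.trans h2
      _ = (64 : ℝ) ^ (n + 1) := by push_cast; ring
  apply Summable.of_nonneg_of_le (fun n => norm_nonneg _) hle
  exact (summable_nat_add_iff 1).2 (summable_geometric_of_lt_one (by positivity) (by linarith))


lemma S_neg :
    (∑' n : ℕ, (sigma' 5 (n + 1) : ℝ) * (-(Real.exp (-(Real.sqrt 3 * Real.pi)))) ^ (n + 1)) < 0 := by
  set r : ℝ := Real.exp (-(Real.sqrt 3 * Real.pi)) with hr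
  have hr0 : 0 < r := Real.exp_pos _
  have hr1 : r < 1 / 76 := r_lt
  have h12 : 12 * r < 1 := by linarith
  rw [Summable.tsum_eq_zero_add summable_f]
  have h0 : (sigma' 5 (0 + 1) : ℝ) * (-r) ^ (0 + 1) = -r := by
    have h1 : sigma' 5 1 = 1 := by simp [sigma']
    rw [h1]; push_cast; ring
  rw [h0]
  have hgs : Summable (fun n : ℕ => 64 * r ^ 2 * (12 * r) ^ n) :=
    (summable_geometric_of_lt_one (by positivity) h12).mul_left _
  have hfs : Summable (fun n : ℕ => (sigma' 5 (n + 1 + 1) : ℝ) * (-r) ^ (n + 1 + 1)) :=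
    (summable_nat_add_iff (f := fun n : ℕ => (sigma' 5 (n + 1) : ℝ) * (-r) ^ (n + 1)) 1).2 summable_f
  have hpt : ∀ n : ℕ, (sigma' 5 (n + 1 + 1) : ℝ) * (-r) ^ (n + 1 + 1) ≤ 64 * r ^ 2 * (12 * r) ^ n := by
    intro n
    have habs : (sigma' 5 (n + 2) : ℝ) * (-r) ^ (n + 2) ≤ (sigma' 5 (n + 2) : ℝ) * r ^ (n + 2) := by
      apply mul_le_mul_of_nonneg_left _ (by positivity)
      calc (-r) ^ (n + 2) ≤ |(-r) ^ (n + 2)| := le_abs_self _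
        _ = r ^ (n + 2) := by rw [_root_.abs_pow, _root_.abs_neg, _root_.abs_of_nonneg hr0.le]
    have hb : (sigma' 5 (n + 2) : ℝ) ≤ 64 * 12 ^ n := by
      have := (sigma5_le (n + 2)).trans (pow6_le n)
      exact_mod_cast this
    calc (sigma' 5 (n + 1 + 1) : ℝ) * (-r) ^ (n + 1 + 1)
        ≤ (sigma' 5 (n + 2) : ℝ) * r ^ (n + 2) := habs
      _ ≤ (64 * 12 ^ n) * r ^ (n + 2) :=
          mul_le_mul_of_nonneg_right hb (by positivity)
      _ = 64 * r ^ 2 * (12 * r) ^ n := by rw [mul_pow]; ring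
  have hT := Summable.tsum_le_tsum hpt hfs hgs
  have hgeom : (∑' n : ℕ, 64 * r ^ 2 * (12 * r) ^ n) = 64 * r ^ 2 * (1 - 12 * r)⁻¹ := by
    rw [tsum_mul_left, tsum_geometric_of_lt_one (by positivity) h12]
  rw [hgeom] at hT
  have hkey : 64 * r ^ 2 * (1 - 12 * r)⁻¹ < r := by
    rw [inv_eq_one_div, mul_one_div, div_lt_iff₀ (by linarith)]
    nlinarith
  linarith

lemma rho_val : Complex.exp (2 * Real.pi * Complex.I / 3)
    = ((-(1/2) : ℝ) : ℂ) + ((Real.sqrt 3 / 2 : ℝ) : ℂ) * I := by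
  have hcos : Real.cos (2 * Real.pi / 3) = -(1/2) := by
    rw [show 2 * Real.pi / 3 = Real.pi - Real.pi / 3 by ring, Real.cos_pi_sub,
      Real.cos_pi_div_three]
  have hsin : Real.sin (2 * Real.pi / 3) = Real.sqrt 3 / 2 := by
    rw [show 2 * Real.pi / 3 = Real.pi - Real.pi / 3 by ring, Real.sin_pi_sub,
      Real.sin_pi_div_three]
  have h1 : 2 * (Real.pi : ℂ) * I / 3 = ((2 * Real.pi / 3 : ℝ) : ℂ) * I := by push_cast; ring
  rw [h1, Complex.exp_mul_I, ← Complex.ofReal_cos, ← Complex.ofReal_sin, hcos, hsin]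

lemma q_val : Complex.exp (2 * Real.pi * Complex.I * Complex.exp (2 * Real.pi * Complex.I / 3))
    = ((-(Real.exp (-(Real.sqrt 3 * Real.pi))) : ℝ) : ℂ) := by
  rw [rho_val]
  have h2 : 2 * (Real.pi : ℂ) * I * (((-(1/2) : ℝ) : ℂ) + ((Real.sqrt 3 / 2 : ℝ) : ℂ) * I)
      = ((-(Real.sqrt 3 * Real.pi) : ℝ) : ℂ) + -((Real.pi : ℂ) * I) := by
    push_cast
    linear_combination (Real.sqrt 3 * Real.pi : ℂ) * Complex.I_sq
  rw [h2, Complex.exp_add, ← Complex.ofReal_exp, Complex.exp_neg, Complex.exp_pi_mul_I]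
  push_cast
  ring

theorem E6_at_rho_real_gt_one :
    (E6 (Complex.exp (2 * Real.pi * Complex.I / 3))).im = 0 ∧
      1 < (E6 (Complex.exp (2 * Real.pi * Complex.I / 3))).re := by
  have hterm : ∀ n : ℕ, (sigma' 5 (n + 1) : ℂ)
      * Complex.exp (2 * Real.pi * Complex.I * Complex.exp (2 * Real.pi * Complex.I / 3)) ^ (n + 1)
      = (((sigma' 5 (n + 1) : ℝ) * (-(Real.exp (-(Real.sqrt 3 * Real.pi)))) ^ (n + 1) : ℝ) : ℂ) := by
    intro n
    rw [q_val]
    push_cast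
    ring
  have hE : E6 (Complex.exp (2 * Real.pi * Complex.I / 3))
      = (((1 - 504 * ∑' n : ℕ, (sigma' 5 (n + 1) : ℝ) * (-(Real.exp (-(Real.sqrt 3 * Real.pi)))) ^ (n + 1)) : ℝ) : ℂ) := by
    rw [E6, tsum_congr hterm, ← Complex.ofReal_tsum]
    push_cast
    ring
  rw [hE]
  constructor
  · exact Complex.ofReal_im _
  · rw [Complex.ofReal_re]
    have := S_neg
    linarith
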